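/- With λ₁ as in Theorem 2.3(1) and λ < λ₁, define v_{m+1}^0 := v_Δ^0(x_{m+1}) and v_{m+1}^k := V_{m+1}^k (the infimum of the discrete action at (x_{m+1},t_k)) for each m and 0 < k ≤ k(T). Then the minimizing velocity field ξ* for each V_n^{l+1} satisfies, at every point of G, L^c_ξ(x_m, t_k, ξ*_m^{k+1}) = D_x v_{m+1}^k, equivalently ξ*_m^{k+1} = H_p(x_m, t_k, c + D_x v_{m+1}^k). -/

import Mathlib

open scoped BigOperators Classical

noncomputable section

def dx (N : ℕ) : ℝ := 1 / (2 * N)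

/-- Time mesh `Δt = 1/(2K)`. -/
def dt (K : ℕ) : ℝ := 1 / (2 * K)

/-- Hyperbolic ratio `λ = Δt/Δx`. -/
def lam (N K : ℕ) : ℝ := dt K / dx N

/-- Position (in units of `Δx`, i.e. the integer index `m`) at time step `k` of the backward
random walk starting at `x_n` at time `t_{l+1}`, whose step from time `j+1` down to time `j`
is `+Δx` if `s j = true` and `-Δx` otherwise. -/
def pos (n : ℤ) (l : ℕ) (s : Fin (l + 1) → Bool) (k : ℕ) : ℤ :=
  n + ∑ j : Fin (l + 1), if k ≤ (j : ℕ) then (if s j then 1 else -1) else 0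

/-- The probability density `μ(γ;ξ)` of the path encoded by `s`: the product over all backward
steps of the transition probability `1/2 - (λ/2)ξ` (step `+Δx`) or `1/2 + (λ/2)ξ` (step `-Δx`),
where `ξ` is evaluated at the grid point `(γ^{j+1}, t_{j+1})` from which the step is taken. -/
def walkMeasure (N K : ℕ) (n : ℤ) (l : ℕ) (ξ : ℤ → ℕ → ℝ) (s : Fin (l + 1) → Bool) : ℝ :=
  ∏ j : Fin (l + 1),
    (if s j then 1 / 2 - lam N K / 2 * ξ (pos n l s ((j : ℕ) + 1)) ((j : ℕ) + 1)
     else 1 / 2 + lam N K / 2 * ξ (pos n l s ((j : ℕ) + 1)) ((j : ℕ) + 1))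

/-- `p_m^k`: the total mass of paths sitting at `x_m` at time `t_k`. -/
def pmass (N K : ℕ) (n : ℤ) (l : ℕ) (ξ : ℤ → ℕ → ℝ) (m : ℤ) (k : ℕ) : ℝ :=
  ∑ s : Fin (l + 1) → Bool, if pos n l s k = m then walkMeasure N K n l ξ s else 0

/-- The discretized initial datum (2.2): `u_Δ^0(x)` is the cell average of `u^0` over
`[x_m - Δx, x_m + Δx)`, where `m = m(x)` is the even integer with `x ∈ [x_m - Δx, x_m + Δx)`. -/
def uD0 (N : ℕ) (u0 : ℝ → ℝ) (x : ℝ) : ℝ :=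
  (1 / (2 * dx N)) *
    ∫ y in (((2 * ⌊(x / dx N + 1) / 2⌋ : ℤ) : ℝ) * dx N - dx N)..(((2 * ⌊(x / dx N + 1) / 2⌋ : ℤ) : ℝ) * dx N + dx N),
      u0 y

/-- The discretized initial datum (2.4): `v_Δ^0(x) = v^0(0) + ∫_0^x u_Δ^0(y) dy`. -/
def vD0 (N : ℕ) (u0 v0 : ℝ → ℝ) (x : ℝ) : ℝ :=
  v0 0 + ∫ y in (0:ℝ)..x, uD0 N u0 y

/-- `u` solves the Lax–Friedrichs scheme (2.1) on the even grid, with initial datum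
`u_m^0 = uinit(x_m)` and `2N`-periodicity. -/
def SolvesLF (N K : ℕ) (H : ℝ → ℝ → ℝ → ℝ) (c : ℝ) (uinit : ℝ → ℝ) (u : ℤ → ℕ → ℝ) : Prop :=
  (∀ m : ℤ, Even m → u m 0 = uinit ((m : ℝ) * dx N)) ∧
  (∀ (m : ℤ) (k : ℕ), u (m + 2 * N) k = u m k) ∧
  (∀ (m : ℤ) (k : ℕ), Even (m + (k : ℤ)) →
    (u (m + 1) (k + 1) - (u m k + u (m + 2) k) / 2) / dt K
      + (H (((m : ℝ) + 2) * dx N) ((k : ℝ) * dt K) (c + u (m + 2) k)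
          - H ((m : ℝ) * dx N) ((k : ℝ) * dt K) (c + u m k)) / (2 * dx N) = 0)

/-- `v` solves the Hamilton–Jacobi scheme (2.3) on the odd grid, with initial datum
`v_{m+1}^0 = vinit(x_{m+1})` and `2N`-periodicity. -/
def SolvesHJ (N K : ℕ) (H : ℝ → ℝ → ℝ → ℝ) (c hc : ℝ) (vinit : ℝ → ℝ) (v : ℤ → ℕ → ℝ) : Prop :=
  (∀ m : ℤ, Odd m → v m 0 = vinit ((m : ℝ) * dx N)) ∧
  (∀ (m : ℤ) (k : ℕ), v (m + 2 * N) k = v m k) ∧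
  (∀ (m : ℤ) (k : ℕ), Even (m + (k : ℤ)) →
    (v m (k + 1) - (v (m - 1) k + v (m + 1) k) / 2) / dt K
      + H ((m : ℝ) * dx N) ((k : ℝ) * dt K) (c + (v (m + 1) k - v (m - 1) k) / (2 * dx N)) = hc)


/-- The Legendre transform `L(x,t,ξ) = sup_p {ξp - H(x,t,p)}`. -/
def Leg (H : ℝ → ℝ → ℝ → ℝ) (x t ξ : ℝ) : ℝ := ⨆ p : ℝ, (ξ * p - H x t p)

/-- `L^c(x,t,ξ) = L(x,t,ξ) - cξ`. -/
def LegC (H : ℝ → ℝ → ℝ → ℝ) (c x t ξ : ℝ) : ℝ := Leg H x t ξ - c * ξ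

/-- A velocity field is admissible when its values lie in `[-λ⁻¹, λ⁻¹]`. -/
def Adm (N K : ℕ) (ξ : ℤ → ℕ → ℝ) : Prop := ∀ m k, |ξ m k| ≤ (lam N K)⁻¹

/-- `(x_m, t_k)` belongs to the grid `G` of points reachable by walks from `(x_n, t_{l+1})`:
`1 ≤ k ≤ l+1`, odd parity, and `|x_m - x_n| ≤ (l+1-k)Δx`. -/
def inG (n : ℤ) (l : ℕ) (m : ℤ) (k : ℕ) : Prop :=
  1 ≤ k ∧ k ≤ l + 1 ∧ Odd (m + (k : ℤ)) ∧ |m - n| ≤ (l : ℤ) + 1 - (k : ℤ)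

/-- The discrete stochastic action
`E_n^{l+1}(ξ) = E_{μ(·;ξ)}[Σ_{0<k≤l+1} L^c(γ^k, t_{k-1}, ξ^k_{m(γ^k)}) Δt + v_Δ^0(γ^0)] + h(c) t_{l+1}`. -/
def gridAction (N K : ℕ) (H : ℝ → ℝ → ℝ → ℝ) (c hc : ℝ) (vinit : ℝ → ℝ)
    (n : ℤ) (l : ℕ) (ξ : ℤ → ℕ → ℝ) : ℝ :=
  (∑ s : Fin (l + 1) → Bool, walkMeasure N K n l ξ s *
      ((∑ k ∈ Finset.Icc 1 (l + 1),
          LegC H c ((pos n l s k : ℝ) * dx N) (((k : ℝ) - 1) * dt K) (ξ (pos n l s k) k) * dt K)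
        + vinit ((pos n l s 0 : ℝ) * dx N)))
    + hc * (((l : ℝ) + 1) * dt K)

/-- The value function defined from the discrete action: `v_{m}^0 := v_Δ^0(x_m)` and, for
`k ≥ 1`, `v_m^k := V_m^k = inf_ξ E_m^k(ξ)`, the infimum of the discrete action at `(x_m, t_k)`
over admissible velocity fields. -/
def Vfun (N K : ℕ) (H : ℝ → ℝ → ℝ → ℝ) (c hc : ℝ) (vinit : ℝ → ℝ) (m : ℤ) (k : ℕ) : ℝ :=
  if k = 0 then vinit ((m : ℝ) * dx N)
  else sInf {y | ∃ ξ, Adm N K ξ ∧ y = gridAction N K H c hc vinit m (k - 1) ξ}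


-- ===== auxiliary development =====

lemma dx_pos {N : ℕ} (hN : 0 < N) : 0 < dx N := by
  have : (0:ℝ) < N := by exact_mod_cast hN
  simp only [dx]; positivity

lemma dt_pos {K : ℕ} (hK : 0 < K) : 0 < dt K := by
  have : (0:ℝ) < K := by exact_mod_cast hK
  simp only [dt]; positivity

lemma lam_pos {N K : ℕ} (hN : 0 < N) (hK : 0 < K) : 0 < lam N K :=
  div_pos (dt_pos hK) (dx_pos hN)

/-- Abstract one-variable Legendre transform. -/
def LegF (f : ℝ → ℝ) (ξ : ℝ) : ℝ := ⨆ p : ℝ, (ξ * p - f p)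

/-- The Legendre analysis package. -/
theorem legendre_pack (f : ℝ → ℝ) (hf : ContDiff ℝ 2 f)
    (hconv : ∀ p, 0 < deriv (deriv f) p)
    (hsl : Filter.Tendsto (fun p => f p / |p|) (Filter.comap abs Filter.atTop) Filter.atTop) :
    ∃ P : ℝ → ℝ, (∀ ξ, deriv f (P ξ) = ξ) ∧ (∀ ξ, HasDerivAt (LegF f) (P ξ) ξ) ∧
      StrictMono P := by
  have hfd : Differentiable ℝ f := hf.differentiable (by norm_num)
  have hfd1 : ContDiff ℝ 1 (deriv f) := by
    have h2 : ContDiff ℝ (1+1) f := by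
      have : ((2:WithTop ℕ∞)) = 1 + 1 := by norm_num
      rwa [this] at hf
    exact (contDiff_succ_iff_deriv.mp h2).2.2
  have hdf_cont : Continuous (deriv f) := hfd1.continuous
  have hmono : StrictMono (deriv f) := strictMono_of_deriv_pos hconv
  -- superlinearity in concrete form
  have hsl' : ∀ C : ℝ, ∃ M : ℝ, ∀ p : ℝ, M ≤ |p| → C ≤ f p / |p| := by
    intro C
    have h := hsl.eventually (Filter.eventually_ge_atTop C)
    rw [Filter.eventually_comap] at h
    rcases Filter.eventually_atTop.mp h with ⟨M, hM⟩
    exact ⟨M, fun p hp => hM |p| hp p rfl⟩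
  -- key convexity inequality : f p ≤ f 0 + p * deriv f p
  have hkey : ∀ p : ℝ, f p ≤ f 0 + p * deriv f p := by
    intro p
    rcases lt_trichotomy p 0 with hp | hp | hp
    · obtain ⟨ccc, hc, hcd⟩ := exists_deriv_eq_slope f hp (hfd.continuous.continuousOn)
        (hfd.differentiableOn)
      have hge : deriv f ccc ≥ deriv f p := (hmono.le_iff_le).mpr (le_of_lt hc.1)
      have hne : (0:ℝ) - p ≠ 0 := by intro h; apply absurd hp; simp at h ⊢; linarith
      have heq : deriv f ccc * (0 - p) = f 0 - f p := by
        rw [hcd, div_mul_cancel₀ _ hne]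
      nlinarith
    · simp [hp]
    · obtain ⟨ccc, hc, hcd⟩ := exists_deriv_eq_slope f hp (hfd.continuous.continuousOn)
        (hfd.differentiableOn)
      have hle : deriv f ccc ≤ deriv f p := (hmono.le_iff_le).mpr (le_of_lt hc.2)
      have hne : p - (0:ℝ) ≠ 0 := by simpa using ne_of_gt hp
      have heq : deriv f ccc * (p - 0) = f p - f 0 := by
        rw [hcd, div_mul_cancel₀ _ hne]
      nlinarith
  -- deriv f tends to atTop / atBot
  have htop : Filter.Tendsto (deriv f) Filter.atTop Filter.atTop := by
    rw [Filter.tendsto_atTop]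
    intro C
    obtain ⟨M, hM⟩ := hsl' (C + |f 0|)
    rw [Filter.eventually_atTop]
    refine ⟨max (max M 1) 1, fun p hp => ?_⟩
    have hp1 : (1:ℝ) ≤ p := le_trans (le_max_right _ _) hp
    have hpM : M ≤ |p| := by
      rw [abs_of_pos (lt_of_lt_of_le one_pos hp1)]
      exact le_trans (le_trans (le_max_left M 1) (le_max_left _ _)) hp
    have h1 : C + |f 0| ≤ f p / |p| := hM p hpM
    have hpa : |p| = p := abs_of_pos (lt_of_lt_of_le one_pos hp1)
    rw [hpa] at h1
    have h2 := hkey p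
    have hppos : (0:ℝ) < p := lt_of_lt_of_le one_pos hp1
    have h3 : (C + |f 0|) * p ≤ f p := by
      rw [le_div_iff₀ hppos] at h1; linarith
    nlinarith [abs_nonneg (f 0), le_abs_self (f 0), neg_abs_le (f 0)]
  have hbot : Filter.Tendsto (deriv f) Filter.atBot Filter.atBot := by
    rw [Filter.tendsto_atBot]
    intro C
    obtain ⟨M, hM⟩ := hsl' (|f 0| - C)
    rw [Filter.eventually_atBot]
    refine ⟨min (min (-M) (-1)) (-1), fun p hp => ?_⟩
    have hp1 : p ≤ -1 := le_trans hp (min_le_right _ _)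
    have hpneg : p < 0 := lt_of_le_of_lt hp1 (by norm_num)
    have hpa : |p| = -p := abs_of_neg hpneg
    have hpM : M ≤ |p| := by
      rw [hpa]
      have : p ≤ -M := le_trans hp (le_trans (min_le_left _ _) (min_le_left _ _))
      linarith
    have h1 : |f 0| - C ≤ f p / |p| := hM p hpM
    rw [hpa] at h1
    have h2 := hkey p
    have h3 : (|f 0| - C) * (-p) ≤ f p := by
      rw [le_div_iff₀ (by linarith : (0:ℝ) < -p)] at h1
      linarith
    nlinarith [abs_nonneg (f 0), le_abs_self (f 0), neg_abs_le (f 0)]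
  have hsurj : Function.Surjective (deriv f) := hdf_cont.surjective htop hbot
  set E : ℝ ≃o ℝ := StrictMono.orderIsoOfSurjective (deriv f) hmono hsurj with hE
  have hEapp : ∀ p, E p = deriv f p := fun p => rfl
  set P : ℝ → ℝ := fun ξ => E.symm ξ with hP
  have hPspec : ∀ ξ, deriv f (P ξ) = ξ := by
    intro ξ; rw [← hEapp]; exact E.apply_symm_apply ξ
  have hPmono : StrictMono P := E.symm.strictMono
  have hPcont : Continuous P := E.symm.continuous
  -- the sup is attained at P ξ
  have hbound : ∀ ξ p, ξ * p - f p ≤ ξ * P ξ - f (P ξ) := by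
    intro ξ p
    set g : ℝ → ℝ := fun q => ξ * q - f q with hg
    have hgd : ∀ q, HasDerivAt g (ξ - deriv f q) q := by
      intro q
      have h := ((hasDerivAt_id q).const_mul ξ).sub (hfd q).hasDerivAt
      exact h.congr_deriv (by simp)
    have hgderiv : deriv g = fun q => ξ - deriv f q := funext fun q => (hgd q).deriv
    rcases le_total p (P ξ) with hple | hple
    · have hmon : MonotoneOn g (Set.Iic (P ξ)) := by
        have hgc : Continuous g := by
          exact ((continuous_const.mul continuous_id).sub hfd.continuous)
        apply monotoneOn_of_deriv_nonneg (convex_Iic _) hgc.continuousOn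
          (fun x _ => ((hgd x).differentiableAt.differentiableWithinAt))
        intro x hx
        rw [interior_Iic] at hx
        rw [(hgd x).deriv]
        have : deriv f x ≤ deriv f (P ξ) := (hmono.le_iff_le).mpr (le_of_lt hx)
        rw [hPspec] at this
        linarith
      exact hmon hple (Set.self_mem_Iic) hple
    · have hant : AntitoneOn g (Set.Ici (P ξ)) := by
        have hgc : Continuous g := by
          exact ((continuous_const.mul continuous_id).sub hfd.continuous)
        apply antitoneOn_of_deriv_nonpos (convex_Ici _) hgc.continuousOn
          (fun x _ => ((hgd x).differentiableAt.differentiableWithinAt))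
        intro x hx
        rw [interior_Ici] at hx
        rw [(hgd x).deriv]
        have : deriv f (P ξ) ≤ deriv f x := (hmono.le_iff_le).mpr (le_of_lt hx)
        rw [hPspec] at this
        linarith
      exact hant (Set.self_mem_Ici) hple hple
  have hbdd : ∀ ξ, BddAbove (Set.range fun p => ξ * p - f p) := by
    intro ξ
    exact ⟨ξ * P ξ - f (P ξ), by rintro y ⟨p, rfl⟩; exact hbound ξ p⟩
  have hLeg : ∀ ξ, LegF f ξ = ξ * P ξ - f (P ξ) := by
    intro ξ
    refine le_antisymm (ciSup_le fun p => hbound ξ p) (le_ciSup (hbdd ξ) (P ξ))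
  -- key subgradient inequality
  have hsub : ∀ ξ η, LegF f ξ + (η - ξ) * P ξ ≤ LegF f η := by
    intro ξ η
    have h1 : η * P ξ - f (P ξ) ≤ LegF f η := le_ciSup (hbdd η) (P ξ)
    rw [hLeg ξ]; linarith
  refine ⟨P, hPspec, ?_, hPmono⟩
  intro ξ
  rw [hasDerivAt_iff_tendsto_slope]
  have hbnd : ∀ η : ℝ, η ≠ ξ → |slope (LegF f) ξ η - P ξ| ≤ |P η - P ξ| := by
    intro η hη
    have hd : η - ξ ≠ 0 := sub_ne_zero.mpr hη
    have e1 : (η - ξ) * P ξ ≤ LegF f η - LegF f ξ := by have := hsub ξ η; linarith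
    have e2 : LegF f η - LegF f ξ ≤ (η - ξ) * P η := by have := hsub η ξ; linarith
    rw [slope_def_field, div_sub' hd, abs_div]
    rw [abs_of_nonneg (by nlinarith : (0:ℝ) ≤ LegF f η - LegF f ξ - (η - ξ) * P ξ)]
    rw [div_le_iff₀ (abs_pos.mpr hd)]
    have h4 : (η - ξ) * (P η - P ξ) ≤ |η - ξ| * |P η - P ξ| := by
      rw [← abs_mul]; exact le_abs_self _
    nlinarith
  have hPtend : Filter.Tendsto (fun η => |P η - P ξ|) (nhdsWithin ξ {x | x ≠ ξ}) (nhds 0) := by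
    have : Filter.Tendsto (fun η => |P η - P ξ|) (nhds ξ) (nhds 0) := by
      have h0 : Filter.Tendsto (fun η => P η - P ξ) (nhds ξ) (nhds 0) := by
        have := (hPcont.tendsto ξ).sub_const (P ξ)
        simpa using this
      simpa using h0.abs
    exact this.mono_left nhdsWithin_le_nhds
  rw [Metric.tendsto_nhds]
  intro ε hε
  have := (Metric.tendsto_nhds.mp hPtend) ε hε
  filter_upwards [this, self_mem_nhdsWithin] with η h1 h2
  have h3 := hbnd η h2
  rw [Real.dist_eq] at h1 ⊢
  simp only [sub_zero, abs_abs] at h1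
  exact lt_of_le_of_lt h3 h1


lemma Leg_eq_LegF (H : ℝ → ℝ → ℝ → ℝ) (x t : ℝ) : Leg H x t = LegF (H x t) := rfl

lemma pos_of_ge {n : ℤ} {l : ℕ} {s : Fin (l+1) → Bool} {k : ℕ} (h : l + 1 ≤ k) :
    pos n l s k = n := by
  unfold pos
  rw [Finset.sum_eq_zero, add_zero]
  intro j _
  rw [if_neg]
  have := j.isLt; omega

lemma pos_snoc (n : ℤ) (l : ℕ) (s' : Fin (l+1) → Bool) (b : Bool) (k : ℕ) (hk : k ≤ l + 1) :
    pos n (l+1) (Fin.snoc s' b) k = pos (n + (if b then 1 else -1)) l s' k := by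
  unfold pos
  rw [Fin.sum_univ_castSucc]
  simp only [Fin.snoc_castSucc, Fin.snoc_last, Fin.coe_castSucc, Fin.val_last]
  rw [if_pos hk]
  ring

lemma walkMeasure_snoc (N K : ℕ) (n : ℤ) (l : ℕ) (ξ : ℤ → ℕ → ℝ) (s' : Fin (l+1) → Bool)
    (b : Bool) :
    walkMeasure N K n (l+1) ξ (Fin.snoc s' b) =
      walkMeasure N K (n + (if b then 1 else -1)) l ξ s' *
        (if b then 1/2 - lam N K/2 * ξ n (l+2) else 1/2 + lam N K/2 * ξ n (l+2)) := by
  unfold walkMeasure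
  rw [Fin.prod_univ_castSucc]
  congr 1
  · apply Finset.prod_congr rfl
    intro j _
    simp only [Fin.snoc_castSucc, Fin.coe_castSucc]
    rw [pos_snoc n l s' b ((j:ℕ)+1) (by have := j.isLt; omega)]
  · simp only [Fin.snoc_last, Fin.val_last]
    rw [pos_of_ge (by omega)]

lemma sum_snoc {l : ℕ} (F : (Fin (l+1+1) → Bool) → ℝ) :
    ∑ s : Fin (l+1+1) → Bool, F s
      = ∑ s' : Fin (l+1) → Bool, (F (Fin.snoc s' true) + F (Fin.snoc s' false)) := by
  rw [← Equiv.sum_comp (Fin.snocEquiv (fun _ => Bool)) F]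
  rw [Fintype.sum_prod_type]
  rw [Fintype.sum_bool]
  rw [← Finset.sum_add_distrib]
  apply Finset.sum_congr rfl
  intro s' _
  congr 1

lemma sum_walkMeasure_eq_one (N K : ℕ) (l : ℕ) :
    ∀ (n : ℤ) (ξ : ℤ → ℕ → ℝ), ∑ s : Fin (l+1) → Bool, walkMeasure N K n l ξ s = 1 := by
  induction l with
  | zero =>
    intro n ξ
    have hsum : ∑ s : Fin 1 → Bool, walkMeasure N K n 0 ξ s
        = ∑ b : Bool, walkMeasure N K n 0 ξ (fun _ => b) := by
      apply Fintype.sum_equiv (Equiv.funUnique (Fin 1) Bool)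
      intro s
      congr 1
      funext i
      have hi : i = 0 := Subsingleton.elim i 0
      subst hi; rfl
    rw [hsum, Fintype.sum_bool]
    have h1 : pos n 0 (fun _ => true) 1 = n := pos_of_ge (by omega)
    have h2 : pos n 0 (fun _ => false) 1 = n := pos_of_ge (by omega)
    unfold walkMeasure
    simp [Fin.prod_univ_succ, h1, h2]
    ring
  | succ l ih =>
    intro n ξ
    rw [sum_snoc]
    have h : ∀ (s' : Fin (l+1) → Bool),
        walkMeasure N K n (l+1) ξ (Fin.snoc s' true) + walkMeasure N K n (l+1) ξ (Fin.snoc s' false)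
          = walkMeasure N K (n+1) l ξ s' * (1/2 - lam N K/2 * ξ n (l+2))
            + walkMeasure N K (n-1) l ξ s' * (1/2 + lam N K/2 * ξ n (l+2)) := by
      intro s'
      rw [walkMeasure_snoc, walkMeasure_snoc]
      norm_num [sub_eq_add_neg]
    rw [Finset.sum_congr rfl (fun s' _ => h s')]
    rw [Finset.sum_add_distrib, ← Finset.sum_mul, ← Finset.sum_mul, ih, ih]
    ring

lemma sum_fin1 (F : (Fin 1 → Bool) → ℝ) :
    ∑ s : Fin 1 → Bool, F s = F (fun _ => true) + F (fun _ => false) := by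
  have hsum : ∑ s : Fin 1 → Bool, F s = ∑ b : Bool, F (fun _ => b) := by
    apply Fintype.sum_equiv (Equiv.funUnique (Fin 1) Bool)
    intro s
    congr 1
    funext i
    have hi : i = 0 := Subsingleton.elim i 0
    subst hi; rfl
  rw [hsum, Fintype.sum_bool]

/-- The one-step value function. -/
def gfun (N K : ℕ) (Hh : ℝ → ℝ → ℝ → ℝ) (c hc : ℝ) (x t A B z : ℝ) : ℝ :=
  (LegC Hh c x t z + hc) * dt K + (1/2 - lam N K/2 * z) * A + (1/2 + lam N K/2 * z) * B

lemma sum_helper {α : Type*} [Fintype α] (fT fF Top : ℝ) (wmT wmF IT IF : α → ℝ)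
    (hwT : ∑ s, wmT s = 1) (hwF : ∑ s, wmF s = 1) :
    ∑ s, ((wmT s * fT) * (Top + IT s) + (wmF s * fF) * (Top + IF s))
      = fT * Top + fF * Top + fT * (∑ s, wmT s * IT s) + fF * (∑ s, wmF s * IF s) := by
  have h : ∀ s, (wmT s * fT) * (Top + IT s) + (wmF s * fF) * (Top + IF s)
      = (fT * Top) * wmT s + (fF * Top) * wmF s + fT * (wmT s * IT s) + fF * (wmF s * IF s) :=
    fun s => by ring
  rw [Finset.sum_congr rfl (fun s _ => h s)]
  rw [Finset.sum_add_distrib, Finset.sum_add_distrib, Finset.sum_add_distrib,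
     ← Finset.mul_sum, ← Finset.mul_sum, ← Finset.mul_sum, ← Finset.mul_sum, hwT, hwF]
  ring

lemma gridAction_zero (N K : ℕ) (Hh : ℝ → ℝ → ℝ → ℝ) (c hc : ℝ) (vinit : ℝ → ℝ)
    (n : ℤ) (ξ : ℤ → ℕ → ℝ) :
    gridAction N K Hh c hc vinit n 0 ξ
      = gfun N K Hh c hc ((n:ℝ) * dx N) (((0:ℕ):ℝ) * dt K)
          (vinit (((n+1 : ℤ) : ℝ) * dx N)) (vinit (((n-1 : ℤ) : ℝ) * dx N)) (ξ n 1) := by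
  unfold gridAction gfun
  rw [sum_fin1]
  have h1 : pos n 0 (fun _ => true) 1 = n := pos_of_ge (by omega)
  have h2 : pos n 0 (fun _ => false) 1 = n := pos_of_ge (by omega)
  have h0t : pos n 0 (fun _ => true) 0 = n + 1 := by
    unfold pos; rw [Fin.sum_univ_one]; norm_num
  have h0f : pos n 0 (fun _ => false) 0 = n - 1 := by
    unfold pos; rw [Fin.sum_univ_one]; norm_num; rfl
  have hwt : walkMeasure N K n 0 ξ (fun _ => true) = 1/2 - lam N K/2 * ξ n 1 := by
    unfold walkMeasure; rw [Fin.prod_univ_one]; simp [h1]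
  have hwf : walkMeasure N K n 0 ξ (fun _ => false) = 1/2 + lam N K/2 * ξ n 1 := by
    unfold walkMeasure; rw [Fin.prod_univ_one]; simp [h2]
  rw [hwt, hwf]
  simp only [Finset.Icc_self, Finset.sum_singleton, h1, h2, h0t, h0f]
  norm_num
  ring

lemma gridAction_succ (N K : ℕ) (Hh : ℝ → ℝ → ℝ → ℝ) (c hc : ℝ) (vinit : ℝ → ℝ)
    (n : ℤ) (l : ℕ) (ξ : ℤ → ℕ → ℝ) :
    gridAction N K Hh c hc vinit n (l+1) ξ
      = gfun N K Hh c hc ((n:ℝ) * dx N) (((l+1:ℕ):ℝ) * dt K)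
          (gridAction N K Hh c hc vinit (n+1) l ξ)
          (gridAction N K Hh c hc vinit (n-1) l ξ) (ξ n (l+2)) := by
  have key : ∀ (s' : Fin (l+1) → Bool) (b : Bool),
      walkMeasure N K n (l+1) ξ (Fin.snoc s' b) *
        ((∑ k ∈ Finset.Icc 1 (l+1+1),
            LegC Hh c ((pos n (l+1) (Fin.snoc s' b) k : ℝ) * dx N) (((k:ℝ)-1) * dt K)
              (ξ (pos n (l+1) (Fin.snoc s' b) k) k) * dt K)
          + vinit ((pos n (l+1) (Fin.snoc s' b) 0 : ℝ) * dx N))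
      = (walkMeasure N K (n + (if b then 1 else -1)) l ξ s' *
          (if b then 1/2 - lam N K/2 * ξ n (l+2) else 1/2 + lam N K/2 * ξ n (l+2))) *
        ((LegC Hh c ((n:ℝ) * dx N) (((l+1:ℕ):ℝ) * dt K) (ξ n (l+2)) * dt K)
          + ((∑ k ∈ Finset.Icc 1 (l+1),
              LegC Hh c ((pos (n + (if b then 1 else -1)) l s' k : ℝ) * dx N) (((k:ℝ)-1) * dt K)
                (ξ (pos (n + (if b then 1 else -1)) l s' k) k) * dt K)
            + vinit ((pos (n + (if b then 1 else -1)) l s' 0 : ℝ) * dx N))) := by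
    intro s' b
    rw [walkMeasure_snoc]
    congr 1
    have hpos0 : pos n (l+1) (Fin.snoc s' b) 0 = pos (n + (if b then 1 else -1)) l s' 0 :=
      pos_snoc _ _ _ _ _ (by omega)
    have hptop : pos n (l+1) (Fin.snoc s' b) (l+1+1) = n := pos_of_ge (by omega)
    have hsum_eq : (∑ k ∈ Finset.Icc 1 (l+1),
        LegC Hh c ((pos n (l+1) (Fin.snoc s' b) k : ℝ) * dx N) (((k:ℝ)-1) * dt K)
          (ξ (pos n (l+1) (Fin.snoc s' b) k) k) * dt K)
        = ∑ k ∈ Finset.Icc 1 (l+1),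
            LegC Hh c ((pos (n + (if b then 1 else -1)) l s' k : ℝ) * dx N) (((k:ℝ)-1) * dt K)
              (ξ (pos (n + (if b then 1 else -1)) l s' k) k) * dt K := by
      apply Finset.sum_congr rfl
      intro k hk
      rw [pos_snoc _ _ _ _ _ (Finset.mem_Icc.mp hk).2]
    rw [Finset.sum_Icc_succ_top (by omega), hsum_eq, hpos0, hptop]
    have hcast : ((l+1+1 : ℕ):ℝ) - 1 = ((l+1:ℕ):ℝ) := by push_cast; ring
    rw [hcast]
    ring
  unfold gridAction
  rw [sum_snoc]
  rw [Finset.sum_congr rfl (fun s' _ => by rw [key s' true, key s' false])]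
  simp only [show (false = true) = False by simp, show (true = true) = True by simp,
    if_true, if_false, show n + (-1 : ℤ) = n - 1 from by ring]
  rw [sum_helper _ _ _ _ _ _ _ (sum_walkMeasure_eq_one N K l (n+1) ξ)
    (sum_walkMeasure_eq_one N K l (n-1) ξ)]
  unfold gfun
  push_cast
  ring

/-- Discrete value function defined by backward recursion. -/
def Vf (N K : ℕ) (Hh : ℝ → ℝ → ℝ → ℝ) (c hc : ℝ) (vinit : ℝ → ℝ) : ℕ → ℤ → ℝ
  | 0, m => vinit ((m:ℝ) * dx N)
  | (k+1), m => sInf ((gfun N K Hh c hc ((m:ℝ) * dx N) ((k:ℝ) * dt K)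
      (Vf N K Hh c hc vinit k (m+1)) (Vf N K Hh c hc vinit k (m-1))) ''
      Set.Icc (-(lam N K)⁻¹) ((lam N K)⁻¹))

def argminIcc (g : ℝ → ℝ) (a b : ℝ) : ℝ :=
  if h : ∃ z ∈ Set.Icc a b, IsMinOn g (Set.Icc a b) z then h.choose else a

lemma argminIcc_mem {g : ℝ → ℝ} {a b : ℝ} (hab : a ≤ b) :
    argminIcc g a b ∈ Set.Icc a b := by
  unfold argminIcc
  split_ifs with h
  · exact h.choose_spec.1
  · exact Set.left_mem_Icc.mpr hab

lemma argminIcc_isMinOn {g : ℝ → ℝ} {a b : ℝ} (hab : a ≤ b)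
    (hg : ContinuousOn g (Set.Icc a b)) :
    IsMinOn g (Set.Icc a b) (argminIcc g a b) := by
  have h : ∃ z ∈ Set.Icc a b, IsMinOn g (Set.Icc a b) z :=
    isCompact_Icc.exists_isMinOn (Set.nonempty_Icc.mpr hab) hg
  rw [argminIcc, dif_pos h]
  exact h.choose_spec.2

lemma sInf_image_of_isMinOn {g : ℝ → ℝ} {s : Set ℝ} {z : ℝ} (hz : z ∈ s)
    (hm : IsMinOn g s z) : sInf (g '' s) = g z := by
  apply le_antisymm
  · exact csInf_le ⟨g z, by rintro y ⟨w, hw, rfl⟩; exact isMinOn_iff.mp hm w hw⟩ ⟨z, hz, rfl⟩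
  · exact le_csInf ⟨g z, z, hz, rfl⟩ (by rintro y ⟨w, hw, rfl⟩; exact isMinOn_iff.mp hm w hw)

/-- The verification (simultaneously optimal) velocity field. -/
def zeta (N K : ℕ) (Hh : ℝ → ℝ → ℝ → ℝ) (c hc : ℝ) (vinit : ℝ → ℝ) : ℤ → ℕ → ℝ :=
  fun m k => Nat.casesOn k 0 (fun k' => argminIcc
    (gfun N K Hh c hc ((m:ℝ) * dx N) ((k':ℝ) * dt K)
      (Vf N K Hh c hc vinit k' (m+1)) (Vf N K Hh c hc vinit k' (m-1)))
    (-(lam N K)⁻¹) ((lam N K)⁻¹))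

lemma lam_inv_nonneg {N K : ℕ} (hN : 0 < N) (hK : 0 < K) : (0:ℝ) ≤ (lam N K)⁻¹ :=
  inv_nonneg.mpr (le_of_lt (lam_pos hN hK))

lemma icc_lam_nonempty {N K : ℕ} (hN : 0 < N) (hK : 0 < K) :
    -(lam N K)⁻¹ ≤ (lam N K)⁻¹ := by
  have := lam_inv_nonneg hN hK; linarith

lemma zeta_Adm {N K : ℕ} (hN : 0 < N) (hK : 0 < K) (Hh : ℝ → ℝ → ℝ → ℝ) (c hc : ℝ)
    (vinit : ℝ → ℝ) : Adm N K (zeta N K Hh c hc vinit) := by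
  intro m k
  cases k with
  | zero => simpa [zeta] using lam_inv_nonneg hN hK
  | succ k' =>
    have h := argminIcc_mem (g := gfun N K Hh c hc ((m:ℝ) * dx N) ((k':ℝ) * dt K)
      (Vf N K Hh c hc vinit k' (m+1)) (Vf N K Hh c hc vinit k' (m-1)))
      (icc_lam_nonempty hN hK)
    rw [abs_le]
    exact ⟨h.1, h.2⟩

lemma gfun_mono {N K : ℕ} (hN : 0 < N) (hK : 0 < K) (Hh : ℝ → ℝ → ℝ → ℝ)
    {c hc x t A A' B B' z : ℝ} (hA : A ≤ A') (hB : B ≤ B') (hz : |z| ≤ (lam N K)⁻¹) :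
    gfun N K Hh c hc x t A B z ≤ gfun N K Hh c hc x t A' B' z := by
  have hlam := lam_pos hN hK
  have h1 : lam N K * z ≤ 1 := by
    calc lam N K * z ≤ lam N K * |z| := by nlinarith [le_abs_self z]
      _ ≤ lam N K * (lam N K)⁻¹ := by nlinarith
      _ = 1 := mul_inv_cancel₀ (ne_of_gt hlam)
  have h2 : -(1:ℝ) ≤ lam N K * z := by
    have : lam N K * (-z) ≤ 1 := by
      calc lam N K * (-z) ≤ lam N K * |z| := by nlinarith [neg_abs_le z]
        _ ≤ lam N K * (lam N K)⁻¹ := by nlinarith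
        _ = 1 := mul_inv_cancel₀ (ne_of_gt hlam)
    nlinarith
  unfold gfun
  have hc1 : (0:ℝ) ≤ 1/2 - lam N K/2 * z := by nlinarith
  have hc2 : (0:ℝ) ≤ 1/2 + lam N K/2 * z := by nlinarith
  nlinarith

/-- Lower bound : every admissible field has action at least `Vf`. -/
lemma dp_lower {N K : ℕ} (hN : 0 < N) (hK : 0 < K) (Hh : ℝ → ℝ → ℝ → ℝ) (c hc : ℝ)
    (vinit : ℝ → ℝ)
    (hbd : ∀ x t A B : ℝ, BddBelow ((gfun N K Hh c hc x t A B) ''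
        Set.Icc (-(lam N K)⁻¹) ((lam N K)⁻¹))) :
    ∀ (l : ℕ) (n : ℤ) (ξ : ℤ → ℕ → ℝ), Adm N K ξ →
      Vf N K Hh c hc vinit (l+1) n ≤ gridAction N K Hh c hc vinit n l ξ := by
  have hle : ∀ (k : ℕ) (m : ℤ) (z : ℝ), z ∈ Set.Icc (-(lam N K)⁻¹) ((lam N K)⁻¹) →
      Vf N K Hh c hc vinit (k+1) m ≤ gfun N K Hh c hc ((m:ℝ) * dx N) ((k:ℝ) * dt K)
        (Vf N K Hh c hc vinit k (m+1)) (Vf N K Hh c hc vinit k (m-1)) z := by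
    intro k m z hz
    show sInf _ ≤ _
    exact csInf_le (hbd _ _ _ _) ⟨z, hz, rfl⟩
  intro l
  induction l with
  | zero =>
    intro n ξ hξ
    rw [gridAction_zero]
    have hz : ξ n 1 ∈ Set.Icc (-(lam N K)⁻¹) ((lam N K)⁻¹) := by
      have := hξ n 1; rw [abs_le] at this; exact ⟨this.1, this.2⟩
    have h := hle 0 n (ξ n 1) hz
    simpa [Vf] using h
  | succ l ih =>
    intro n ξ hξ
    rw [gridAction_succ]
    have hz : ξ n (l+2) ∈ Set.Icc (-(lam N K)⁻¹) ((lam N K)⁻¹) := by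
      have := hξ n (l+2); rw [abs_le] at this; exact ⟨this.1, this.2⟩
    calc Vf N K Hh c hc vinit (l+1+1) n
        ≤ gfun N K Hh c hc ((n:ℝ) * dx N) (((l+1 : ℕ):ℝ) * dt K)
          (Vf N K Hh c hc vinit (l+1) (n+1)) (Vf N K Hh c hc vinit (l+1) (n-1))
          (ξ n (l+2)) := hle (l+1) n _ hz
      _ ≤ gfun N K Hh c hc ((n:ℝ) * dx N) (((l+1 : ℕ):ℝ) * dt K)
          (gridAction N K Hh c hc vinit (n+1) l ξ) (gridAction N K Hh c hc vinit (n-1) l ξ)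
          (ξ n (l+2)) := gfun_mono hN hK Hh (ih (n+1) ξ hξ) (ih (n-1) ξ hξ) (hξ n (l+2))

/-- The verification field attains `Vf`. -/
lemma dp_attain {N K : ℕ} (hN : 0 < N) (hK : 0 < K) (Hh : ℝ → ℝ → ℝ → ℝ) (c hc : ℝ)
    (vinit : ℝ → ℝ)
    (hgc : ∀ x t A B : ℝ, ContinuousOn (gfun N K Hh c hc x t A B)
        (Set.Icc (-(lam N K)⁻¹) ((lam N K)⁻¹))) :
    ∀ (l : ℕ) (n : ℤ),
      gridAction N K Hh c hc vinit n l (zeta N K Hh c hc vinit) = Vf N K Hh c hc vinit (l+1) n := by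
  intro l
  induction l with
  | zero =>
    intro n
    rw [gridAction_zero]
    have hmin := argminIcc_isMinOn (icc_lam_nonempty hN hK)
      (hgc ((n:ℝ) * dx N) (((0:ℕ):ℝ) * dt K) (Vf N K Hh c hc vinit 0 (n+1))
        (Vf N K Hh c hc vinit 0 (n-1)))
    have hmem := argminIcc_mem (g := gfun N K Hh c hc ((n:ℝ) * dx N) (((0:ℕ):ℝ) * dt K)
      (Vf N K Hh c hc vinit 0 (n+1)) (Vf N K Hh c hc vinit 0 (n-1))) (icc_lam_nonempty hN hK)
    have h := sInf_image_of_isMinOn hmem hmin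
    show gfun N K Hh c hc ((n:ℝ) * dx N) (((0:ℕ):ℝ) * dt K)
        (vinit (((n+1 : ℤ) : ℝ) * dx N)) (vinit (((n-1 : ℤ) : ℝ) * dx N))
        (zeta N K Hh c hc vinit n 1) = _
    rw [show zeta N K Hh c hc vinit n 1 = argminIcc
      (gfun N K Hh c hc ((n:ℝ) * dx N) (((0:ℕ):ℝ) * dt K)
        (Vf N K Hh c hc vinit 0 (n+1)) (Vf N K Hh c hc vinit 0 (n-1)))
      (-(lam N K)⁻¹) ((lam N K)⁻¹) from rfl]
    show gfun _ _ _ _ _ _ _ (Vf N K Hh c hc vinit 0 (n+1)) (Vf N K Hh c hc vinit 0 (n-1)) _ = _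
    rw [← h]
    simp [Vf]
  | succ l ih =>
    intro n
    rw [gridAction_succ, ih (n+1), ih (n-1)]
    have hmin := argminIcc_isMinOn (icc_lam_nonempty hN hK)
      (hgc ((n:ℝ) * dx N) (((l+1:ℕ):ℝ) * dt K) (Vf N K Hh c hc vinit (l+1) (n+1))
        (Vf N K Hh c hc vinit (l+1) (n-1)))
    have hmem := argminIcc_mem (g := gfun N K Hh c hc ((n:ℝ) * dx N) (((l+1:ℕ):ℝ) * dt K)
      (Vf N K Hh c hc vinit (l+1) (n+1)) (Vf N K Hh c hc vinit (l+1) (n-1)))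
      (icc_lam_nonempty hN hK)
    have h := sInf_image_of_isMinOn hmem hmin
    rw [show zeta N K Hh c hc vinit n (l+2) = argminIcc
      (gfun N K Hh c hc ((n:ℝ) * dx N) (((l+1:ℕ):ℝ) * dt K)
        (Vf N K Hh c hc vinit (l+1) (n+1)) (Vf N K Hh c hc vinit (l+1) (n-1)))
      (-(lam N K)⁻¹) ((lam N K)⁻¹) from rfl]
    rw [← h]
    simp [Vf]

lemma Vf_zero_def (N K : ℕ) (Hh : ℝ → ℝ → ℝ → ℝ) (c hc : ℝ) (vinit : ℝ → ℝ) (m : ℤ) :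
    Vf N K Hh c hc vinit 0 m = vinit ((m:ℝ) * dx N) := rfl

lemma Vf_succ_def (N K : ℕ) (Hh : ℝ → ℝ → ℝ → ℝ) (c hc : ℝ) (vinit : ℝ → ℝ) (k : ℕ) (m : ℤ) :
    Vf N K Hh c hc vinit (k+1) m
      = sInf ((gfun N K Hh c hc ((m:ℝ) * dx N) ((k:ℝ) * dt K)
          (Vf N K Hh c hc vinit k (m+1)) (Vf N K Hh c hc vinit k (m-1))) ''
          Set.Icc (-(lam N K)⁻¹) ((lam N K)⁻¹)) := by simp [Vf]

lemma gfun_hasDerivAt {N K : ℕ} (Hh : ℝ → ℝ → ℝ → ℝ) {c hc x t : ℝ} (A B : ℝ) {P : ℝ → ℝ}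
    (hLd : ∀ z, HasDerivAt (fun z => LegC Hh c x t z) (P z - c) z) (z : ℝ) :
    HasDerivAt (gfun N K Hh c hc x t A B) ((P z - c) * dt K + lam N K/2 * (B - A)) z := by
  have h1 : HasDerivAt (fun z => (LegC Hh c x t z + hc) * dt K) ((P z - c) * dt K) z :=
    ((hLd z).add_const hc).mul_const _
  have h2 : HasDerivAt (fun z : ℝ => (1/2 - lam N K/2 * z) * A) (-(lam N K/2) * A) z := by
    have hb : HasDerivAt (fun z : ℝ => 1/2 - lam N K/2 * z) (-(lam N K/2)) z := by
      simpa using (HasDerivAt.const_sub (1/2 : ℝ) ((hasDerivAt_id z).const_mul (lam N K/2)))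
    exact hb.mul_const A
  have h3 : HasDerivAt (fun z : ℝ => (1/2 + lam N K/2 * z) * B) ((lam N K/2) * B) z := by
    have hb : HasDerivAt (fun z : ℝ => 1/2 + lam N K/2 * z) (lam N K/2) z := by
      simpa using (HasDerivAt.const_add (1/2 : ℝ) ((hasDerivAt_id z).const_mul (lam N K/2)))
    exact hb.mul_const B
  have h := (h1.add h2).add h3
  have heq : (P z - c) * dt K + -(lam N K/2) * A + lam N K/2 * B
      = (P z - c) * dt K + lam N K/2 * (B - A) := by ring
  rw [heq] at h
  exact h

lemma gfun_differentiable {N K : ℕ} (Hh : ℝ → ℝ → ℝ → ℝ) {c hc x t : ℝ} (A B : ℝ) {P : ℝ → ℝ}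
    (hLd : ∀ z, HasDerivAt (fun z => LegC Hh c x t z) (P z - c) z) :
    Differentiable ℝ (gfun N K Hh c hc x t A B) :=
  fun z => (gfun_hasDerivAt Hh A B hLd z).differentiableAt

lemma gfun_strictConvexOn {N K : ℕ} (hK : 0 < K) (Hh : ℝ → ℝ → ℝ → ℝ) {c hc x t : ℝ}
    (A B : ℝ) {P : ℝ → ℝ}
    (hLd : ∀ z, HasDerivAt (fun z => LegC Hh c x t z) (P z - c) z) (hPm : StrictMono P) :
    StrictConvexOn ℝ (Set.Icc (-(lam N K)⁻¹) ((lam N K)⁻¹)) (gfun N K Hh c hc x t A B) := by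
  have hdiff := gfun_differentiable Hh A B hLd (N := N) (K := K) (hc := hc)
  have hderiv : deriv (gfun N K Hh c hc x t A B)
      = fun z => (P z - c) * dt K + lam N K/2 * (B - A) :=
    funext fun z => (gfun_hasDerivAt Hh A B hLd z).deriv
  have hmono : StrictMono (deriv (gfun N K Hh c hc x t A B)) := by
    rw [hderiv]
    intro a b hab
    have := hPm hab
    have hdt := dt_pos hK
    have : (P a - c) * dt K < (P b - c) * dt K := by nlinarith
    linarith
  exact (StrictMono.strictConvexOn_univ_of_deriv hdiff.continuous hmono).subset
    (Set.subset_univ _) (convex_Icc _ _)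

set_option maxHeartbeats 2000000 in
/-- Theorem 2.3.2: with `λ₁` as in Theorem 2.3(1) and `λ < λ₁`, defining
`v_{m+1}^k` from the infima `V_{m+1}^k` of the discrete action (and `v_Δ^0` at `k = 0`),
every minimizing velocity field `ξ*` for `V_n^{l+1}` satisfies on `G`
`L^c_ξ(x_m, t_k, ξ*_m^{k+1}) = D_x v_{m+1}^k`, equivalently
`ξ*_m^{k+1} = H_p(x_m, t_k, c + D_x v_{m+1}^k)`. -/
theorem minimizing_field_euler_lagrange
    (N K : ℕ) (hN : 0 < N) (hK : 0 < K)
    (H : ℝ → ℝ → ℝ → ℝ)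
    (hH_C2 : ContDiff ℝ 2 (fun q : ℝ × ℝ × ℝ => H q.1 q.2.1 q.2.2))
    (hH_perx : ∀ x t p, H (x + 1) t p = H x t p)
    (hH_pert : ∀ x t p, H x (t + 1) p = H x t p)
    (hH_conv : ∀ x t p, 0 < deriv (deriv (H x t)) p)
    (hH_sl : ∀ x t, Filter.Tendsto (fun p => H x t p / |p|)
      (Filter.comap abs Filter.atTop) Filter.atTop)
    (hH_A4 : ∃ α > 0, ∀ x t ξ, |deriv (fun y => Leg H y t ξ) x| ≤ α * (|Leg H x t ξ| + 1))
    (T : ℝ) (hT : 0 < T) (c0 c1 c : ℝ) (hc : c ∈ Set.Icc c0 c1)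
    (r : ℝ) (hr : 0 < r) (hFun : ℝ → ℝ) (u0 v0 : ℝ → ℝ)
    (hu0_int : ∀ a b : ℝ, IntervalIntegrable u0 MeasureTheory.volume a b)
    (hu0_per : ∀ y, u0 (y + 1) = u0 y)
    (hu0_mean : (∫ y in (0:ℝ)..1, u0 y) = 0)
    (hu0_bd : ∀ y, |u0 y| ≤ r)
    (hv0_bd : ∀ y, |v0 y| ≤ r)
    (hv0_deriv : ∀ x, v0 x = v0 0 + ∫ y in (0:ℝ)..x, u0 y)
    (lam1 : ℝ) (hlam1 : 0 < lam1) (hscale : lam N K < lam1)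
    (hstab : ∀ (n : ℤ) (l : ℕ), Odd (n + (l : ℤ) + 1) → l + 1 ≤ Nat.floor (T / dt K) →
      ∃ ξs : ℤ → ℕ → ℝ, Adm N K ξs ∧
        (∀ ξ : ℤ → ℕ → ℝ, Adm N K ξ →
          gridAction N K H c (hFun c) (vD0 N u0 v0) n l ξs
            ≤ gridAction N K H c (hFun c) (vD0 N u0 v0) n l ξ) ∧
        (∀ (m : ℤ) (k : ℕ), inG n l m k → |ξs m k| ≤ lam1⁻¹))
 :
    ∀ (n : ℤ) (l : ℕ), Odd (n + (l : ℤ) + 1) → l + 1 ≤ Nat.floor (T / dt K) →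
    ∀ ξs : ℤ → ℕ → ℝ, Adm N K ξs →
      (∀ ξ : ℤ → ℕ → ℝ, Adm N K ξ →
        gridAction N K H c (hFun c) (vD0 N u0 v0) n l ξs
          ≤ gridAction N K H c (hFun c) (vD0 N u0 v0) n l ξ) →
      ∀ (m : ℤ) (k : ℕ), inG n l m (k + 1) →
        deriv (fun z => LegC H c ((m : ℝ) * dx N) ((k : ℝ) * dt K) z) (ξs m (k + 1))
            = (Vfun N K H c (hFun c) (vD0 N u0 v0) (m + 1) k
                - Vfun N K H c (hFun c) (vD0 N u0 v0) (m - 1) k) / (2 * dx N) ∧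
          ξs m (k + 1) = deriv (H ((m : ℝ) * dx N) ((k : ℝ) * dt K))
            (c + (Vfun N K H c (hFun c) (vD0 N u0 v0) (m + 1) k
                - Vfun N K H c (hFun c) (vD0 N u0 v0) (m - 1) k) / (2 * dx N)) := by
  classical
  set vin : ℝ → ℝ := vD0 N u0 v0 with hvin
  set hcv : ℝ := hFun c with hhcv
  -- Legendre packages for every (x,t)
  have hC2 : ∀ x t : ℝ, ContDiff ℝ 2 (H x t) := fun x t =>
    hH_C2.comp ((contDiff_const (c := x)).prodMk ((contDiff_const (c := t)).prodMk contDiff_id))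
  have hpack := fun x t : ℝ => legendre_pack (H x t) (hC2 x t) (hH_conv x t) (hH_sl x t)
  choose P hPinv hPd hPm using hpack
  have hLd : ∀ x t : ℝ, ∀ z, HasDerivAt (fun z => LegC H c x t z) (P x t z - c) z := by
    intro x t z
    have h := (hPd x t z).sub ((hasDerivAt_id z).const_mul c)
    have heq : (fun z => LegC H c x t z) = fun z => LegF (H x t) z - c * z := by
      funext w; rfl
    rw [heq]
    exact h.congr_deriv (by simp)
  have hgc : ∀ x t A B : ℝ, ContinuousOn (gfun N K H c hcv x t A B)
      (Set.Icc (-(lam N K)⁻¹) ((lam N K)⁻¹)) :=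
    fun x t A B => (gfun_differentiable H A B (hLd x t)).continuous.continuousOn
  have hbd : ∀ x t A B : ℝ,
      BddBelow ((gfun N K H c hcv x t A B) '' Set.Icc (-(lam N K)⁻¹) ((lam N K)⁻¹)) := by
    intro x t A B
    obtain ⟨z0, hz0, hz0m⟩ := isCompact_Icc.exists_isMinOn
      (Set.nonempty_Icc.mpr (icc_lam_nonempty hN hK)) (hgc x t A B)
    exact ⟨gfun N K H c hcv x t A B z0, by rintro y ⟨w, hw, rfl⟩; exact isMinOn_iff.mp hz0m w hw⟩
  have hdlow := dp_lower hN hK H c hcv vin hbd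
  have hatt := dp_attain hN hK H c hcv vin hgc
  have hzAdm := zeta_Adm hN hK H c hcv vin
  have hVfun : ∀ (m : ℤ) (kk : ℕ), Vfun N K H c hcv vin m kk = Vf N K H c hcv vin kk m := by
    intro m kk
    cases kk with
    | zero => simp [Vfun, Vf]
    | succ kk =>
      have h0 : Vfun N K H c hcv vin m (kk+1)
          = sInf {y | ∃ ξ, Adm N K ξ ∧ y = gridAction N K H c hcv vin m kk ξ} := by
        simp [Vfun]
      rw [h0]
      apply le_antisymm
      · exact csInf_le ⟨Vf N K H c hcv vin (kk+1) m,
          by rintro y ⟨ξ, hξ, rfl⟩; exact hdlow kk m ξ hξ⟩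
          ⟨zeta N K H c hcv vin, hzAdm, (hatt kk m).symm⟩
      · exact le_csInf ⟨_, ⟨zeta N K H c hcv vin, hzAdm, (hatt kk m).symm⟩⟩
          (by rintro y ⟨ξ, hξ, rfl⟩; exact hdlow kk m ξ hξ)
  -- decomposition of the action at the top point
  have decomp : ∀ (l : ℕ) (n : ℤ) (ξ : ℤ → ℕ → ℝ), Adm N K ξ →
      ∃ A B : ℝ, gridAction N K H c hcv vin n l ξ
          = gfun N K H c hcv ((n:ℝ) * dx N) ((l:ℝ) * dt K) A B (ξ n (l+1))
        ∧ Vf N K H c hcv vin l (n+1) ≤ A ∧ Vf N K H c hcv vin l (n-1) ≤ B := by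
    intro l n ξ hξ
    cases l with
    | zero =>
      refine ⟨Vf N K H c hcv vin 0 (n+1), Vf N K H c hcv vin 0 (n-1), ?_, le_refl _, le_refl _⟩
      rw [gridAction_zero]
      rfl
    | succ l' =>
      exact ⟨_, _, gridAction_succ N K H c hcv vin n l' ξ,
        hdlow l' (n+1) ξ hξ, hdlow l' (n-1) ξ hξ⟩
  have hlam := lam_pos hN hK
  have hl1inv : lam1⁻¹ < (lam N K)⁻¹ := inv_strictAnti₀ hlam hscale
  have hlaml1 : lam N K * lam1⁻¹ < 1 := by
    rw [← div_eq_mul_inv]; exact (div_lt_one hlam1).mpr hscale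
  have hl1nn : (0:ℝ) ≤ lam1⁻¹ := inv_nonneg.mpr (le_of_lt hlam1)
  -- THE TOP ANALYSIS
  have top : ∀ (l : ℕ) (n : ℤ), Odd (n + (l:ℤ) + 1) → l + 1 ≤ Nat.floor (T / dt K) →
      ∀ ξs : ℤ → ℕ → ℝ, Adm N K ξs →
      (∀ ξ, Adm N K ξ → gridAction N K H c hcv vin n l ξs ≤ gridAction N K H c hcv vin n l ξ) →
      ∀ A B : ℝ,
      gridAction N K H c hcv vin n l ξs
        = gfun N K H c hcv ((n:ℝ) * dx N) ((l:ℝ) * dt K) A B (ξs n (l+1)) →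
      Vf N K H c hcv vin l (n+1) ≤ A → Vf N K H c hcv vin l (n-1) ≤ B →
      (A = Vf N K H c hcv vin l (n+1) ∧ B = Vf N K H c hcv vin l (n-1) ∧
        deriv (fun z => LegC H c ((n:ℝ) * dx N) ((l:ℝ) * dt K) z) (ξs n (l+1))
          = (Vf N K H c hcv vin l (n+1) - Vf N K H c hcv vin l (n-1)) / (2 * dx N) ∧
        ξs n (l+1) = deriv (H ((n:ℝ) * dx N) ((l:ℝ) * dt K))
          (c + (Vf N K H c hcv vin l (n+1) - Vf N K H c hcv vin l (n-1)) / (2 * dx N))) := by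
    intro l n hodd hle ξs hA hmin A B hgA hVA hVB
    have hVle : ∀ w ∈ Set.Icc (-(lam N K)⁻¹) ((lam N K)⁻¹),
        Vf N K H c hcv vin (l+1) n ≤ gfun N K H c hcv ((n:ℝ) * dx N) ((l:ℝ) * dt K)
          (Vf N K H c hcv vin l (n+1)) (Vf N K H c hcv vin l (n-1)) w := by
      intro w hw
      rw [Vf_succ_def]
      exact csInf_le (hbd _ _ _ _) ⟨w, hw, rfl⟩
    have mkMin : ∀ (ξ : ℤ → ℕ → ℝ), Adm N K ξ →
        (∀ ξ', Adm N K ξ' →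
          gridAction N K H c hcv vin n l ξ ≤ gridAction N K H c hcv vin n l ξ') →
        IsMinOn (gfun N K H c hcv ((n:ℝ) * dx N) ((l:ℝ) * dt K)
            (Vf N K H c hcv vin l (n+1)) (Vf N K H c hcv vin l (n-1)))
          (Set.Icc (-(lam N K)⁻¹) ((lam N K)⁻¹)) (ξ n (l+1))
          ∧ gridAction N K H c hcv vin n l ξ = Vf N K H c hcv vin (l+1) n := by
      intro ξ hξA hξm
      obtain ⟨A', B', h1, h2, h3⟩ := decomp l n ξ hξA
      have hval : gridAction N K H c hcv vin n l ξ = Vf N K H c hcv vin (l+1) n :=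
        le_antisymm (le_trans (hξm _ hzAdm) (le_of_eq (hatt l n))) (hdlow l n ξ hξA)
      refine ⟨isMinOn_iff.mpr fun w hw => ?_, hval⟩
      calc gfun N K H c hcv ((n:ℝ) * dx N) ((l:ℝ) * dt K)
            (Vf N K H c hcv vin l (n+1)) (Vf N K H c hcv vin l (n-1)) (ξ n (l+1))
          ≤ gfun N K H c hcv ((n:ℝ) * dx N) ((l:ℝ) * dt K) A' B' (ξ n (l+1)) :=
            gfun_mono hN hK H h2 h3 (hξA n (l+1))
        _ = gridAction N K H c hcv vin n l ξ := h1.symm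
        _ = Vf N K H c hcv vin (l+1) n := hval
        _ ≤ _ := hVle w hw
    obtain ⟨hminz, hvalz⟩ := mkMin ξs hA hmin
    obtain ⟨ξst, hstA, hstM, hstB⟩ := hstab n l hodd hle
    obtain ⟨hminz', _⟩ := mkMin ξst hstA hstM
    have hsc := gfun_strictConvexOn hK H (Vf N K H c hcv vin l (n+1))
      (Vf N K H c hcv vin l (n-1)) (hLd ((n:ℝ) * dx N) ((l:ℝ) * dt K))
      (hPm ((n:ℝ) * dx N) ((l:ℝ) * dt K)) (N := N) (hc := hcv)
    have hzmem : ξs n (l+1) ∈ Set.Icc (-(lam N K)⁻¹) ((lam N K)⁻¹) := by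
      have := hA n (l+1); rw [abs_le] at this; exact ⟨this.1, this.2⟩
    have hzmem' : ξst n (l+1) ∈ Set.Icc (-(lam N K)⁻¹) ((lam N K)⁻¹) := by
      have := hstA n (l+1); rw [abs_le] at this; exact ⟨this.1, this.2⟩
    have heqz : ξs n (l+1) = ξst n (l+1) := hsc.eq_of_isMinOn hminz hminz' hzmem hzmem'
    have hstBd : |ξst n (l+1)| ≤ lam1⁻¹ := by
      apply hstB n (l+1)
      refine ⟨by omega, by omega, ?_, ?_⟩
      · obtain ⟨j, hj⟩ := hodd
        exact ⟨j, by push_cast; omega⟩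
      · rw [sub_self, abs_zero]; push_cast; omega
    have hzbd : |ξs n (l+1)| ≤ lam1⁻¹ := by rw [heqz]; exact hstBd
    rw [abs_le] at hzbd
    have hzlt : ξs n (l+1) < (lam N K)⁻¹ := lt_of_le_of_lt hzbd.2 hl1inv
    have hzgt : -(lam N K)⁻¹ < ξs n (l+1) := by
      have := hzbd.1; linarith
    have hnhds : Set.Icc (-(lam N K)⁻¹) ((lam N K)⁻¹) ∈ nhds (ξs n (l+1)) :=
      Icc_mem_nhds hzgt hzlt
    have hloc : IsLocalMin (gfun N K H c hcv ((n:ℝ) * dx N) ((l:ℝ) * dt K)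
        (Vf N K H c hcv vin l (n+1)) (Vf N K H c hcv vin l (n-1))) (ξs n (l+1)) :=
      hminz.isLocalMin hnhds
    have hder0 := hloc.deriv_eq_zero
    have hderval := (gfun_hasDerivAt (N := N) (K := K) (hc := hcv) H
      (Vf N K H c hcv vin l (n+1))
      (Vf N K H c hcv vin l (n-1)) (hLd ((n:ℝ) * dx N) ((l:ℝ) * dt K)) (ξs n (l+1))).deriv
    have hdx := dx_pos hN
    have hdt := dt_pos hK
    have e : (P ((n:ℝ) * dx N) ((l:ℝ) * dt K) (ξs n (l+1)) - c) * dt K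
        + lam N K/2 * (Vf N K H c hcv vin l (n-1) - Vf N K H c hcv vin l (n+1)) = 0 := by
      rw [← hderval]; exact hder0
    have hPeq : P ((n:ℝ) * dx N) ((l:ℝ) * dt K) (ξs n (l+1)) - c
        = (Vf N K H c hcv vin l (n+1) - Vf N K H c hcv vin l (n-1)) / (2 * dx N) := by
      rw [eq_div_iff (by positivity : (2:ℝ) * dx N ≠ 0)]
      apply mul_right_cancel₀ (ne_of_gt hdt)
      have e2 : (P ((n:ℝ) * dx N) ((l:ℝ) * dt K) (ξs n (l+1)) - c) * dt K
          = dt K / dx N / 2 * (Vf N K H c hcv vin l (n+1) - Vf N K H c hcv vin l (n-1)) := by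
        have hlameq : lam N K = dt K / dx N := rfl
        rw [hlameq] at e
        linarith
      calc (P ((n:ℝ) * dx N) ((l:ℝ) * dt K) (ξs n (l+1)) - c) * (2 * dx N) * dt K
          = ((P ((n:ℝ) * dx N) ((l:ℝ) * dt K) (ξs n (l+1)) - c) * dt K) * (2 * dx N) := by ring
        _ = (dt K / dx N / 2 * (Vf N K H c hcv vin l (n+1) - Vf N K H c hcv vin l (n-1)))
              * (2 * dx N) := by rw [e2]
        _ = (Vf N K H c hcv vin l (n+1) - Vf N K H c hcv vin l (n-1)) * dt K := by
              field_simp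
    -- A = V₊ and B = V₋
    have hgVz : gfun N K H c hcv ((n:ℝ) * dx N) ((l:ℝ) * dt K)
        (Vf N K H c hcv vin l (n+1)) (Vf N K H c hcv vin l (n-1)) (ξs n (l+1))
        = Vf N K H c hcv vin (l+1) n :=
      le_antisymm (by rw [← hvalz, hgA]; exact gfun_mono hN hK H hVA hVB (hA n (l+1)))
        (hVle _ hzmem)
    have hABz : gfun N K H c hcv ((n:ℝ) * dx N) ((l:ℝ) * dt K) A B (ξs n (l+1))
        = gfun N K H c hcv ((n:ℝ) * dx N) ((l:ℝ) * dt K)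
          (Vf N K H c hcv vin l (n+1)) (Vf N K H c hcv vin l (n-1)) (ξs n (l+1)) := by
      rw [hgVz, ← hvalz, hgA]
    have hp1 : lam N K/2 * (ξs n (l+1)) < 1/2 := by
      have h2 : lam N K * (ξs n (l+1)) ≤ lam N K * lam1⁻¹ := by nlinarith [hzbd.2]
      linarith
    have hp2 : -(1/2 : ℝ) < lam N K/2 * (ξs n (l+1)) := by
      have h2 : lam N K * (-(ξs n (l+1))) ≤ lam N K * lam1⁻¹ := by nlinarith [hzbd.1]
      linarith
    have hsum0 : (1/2 - lam N K/2 * (ξs n (l+1))) * (A - Vf N K H c hcv vin l (n+1))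
        + (1/2 + lam N K/2 * (ξs n (l+1))) * (B - Vf N K H c hcv vin l (n-1)) = 0 := by
      unfold gfun at hABz
      linear_combination hABz
    have hAe : A = Vf N K H c hcv vin l (n+1) := by
      have h1 : (0:ℝ) ≤ (1/2 - lam N K/2 * (ξs n (l+1))) * (A - Vf N K H c hcv vin l (n+1)) :=
        mul_nonneg (by linarith) (by linarith)
      have h2 : (0:ℝ) ≤ (1/2 + lam N K/2 * (ξs n (l+1))) * (B - Vf N K H c hcv vin l (n-1)) :=
        mul_nonneg (by linarith) (by linarith)
      have h3 : (1/2 - lam N K/2 * (ξs n (l+1))) * (A - Vf N K H c hcv vin l (n+1)) = 0 := by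
        linarith
      rcases mul_eq_zero.mp h3 with h | h
      · linarith
      · linarith
    have hBe : B = Vf N K H c hcv vin l (n-1) := by
      have h1 : (0:ℝ) ≤ (1/2 - lam N K/2 * (ξs n (l+1))) * (A - Vf N K H c hcv vin l (n+1)) :=
        mul_nonneg (by linarith) (by linarith)
      have h2 : (0:ℝ) ≤ (1/2 + lam N K/2 * (ξs n (l+1))) * (B - Vf N K H c hcv vin l (n-1)) :=
        mul_nonneg (by linarith) (by linarith)
      have h3 : (1/2 + lam N K/2 * (ξs n (l+1))) * (B - Vf N K H c hcv vin l (n-1)) = 0 := by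
        linarith
      rcases mul_eq_zero.mp h3 with h | h
      · linarith
      · linarith
    refine ⟨hAe, hBe, ?_, ?_⟩
    · rw [(hLd ((n:ℝ) * dx N) ((l:ℝ) * dt K) (ξs n (l+1))).deriv]
      exact hPeq
    · have hcd : c + (Vf N K H c hcv vin l (n+1) - Vf N K H c hcv vin l (n-1)) / (2 * dx N)
          = P ((n:ℝ) * dx N) ((l:ℝ) * dt K) (ξs n (l+1)) := by
        rw [← hPeq]; ring
      rw [hcd]
      exact (hPinv ((n:ℝ) * dx N) ((l:ℝ) * dt K) (ξs n (l+1))).symm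
  -- MAIN INDUCTION
  have key : ∀ (l : ℕ) (n : ℤ), Odd (n + (l:ℤ) + 1) → l + 1 ≤ Nat.floor (T / dt K) →
      ∀ ξs : ℤ → ℕ → ℝ, Adm N K ξs →
      (∀ ξ, Adm N K ξ → gridAction N K H c hcv vin n l ξs ≤ gridAction N K H c hcv vin n l ξ) →
      ∀ (m : ℤ) (k : ℕ), inG n l m (k+1) →
        deriv (fun z => LegC H c ((m : ℝ) * dx N) ((k : ℝ) * dt K) z) (ξs m (k + 1))
            = (Vfun N K H c hcv vin (m + 1) k - Vfun N K H c hcv vin (m - 1) k) / (2 * dx N) ∧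
          ξs m (k + 1) = deriv (H ((m : ℝ) * dx N) ((k : ℝ) * dt K))
            (c + (Vfun N K H c hcv vin (m + 1) k - Vfun N K H c hcv vin (m - 1) k)
              / (2 * dx N)) := by
    intro l
    induction l with
    | zero =>
      intro n hodd hle ξs hA hmin m k hinG
      obtain ⟨h1, h2, h3, h4⟩ := hinG
      have hk : k = 0 := by omega
      subst hk
      have hm : m = n := by
        rw [abs_le] at h4
        push_cast at h4
        omega
      subst hm
      obtain ⟨A, B, hgA, hVA, hVB⟩ := decomp 0 m ξs hA
      obtain ⟨_, _, hc1, hc2⟩ := top 0 m hodd hle ξs hA hmin A B hgA hVA hVB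
      rw [hVfun (m+1) 0, hVfun (m-1) 0]
      exact ⟨hc1, hc2⟩
    | succ l' ih =>
      intro n hodd hle ξs hA hmin m k hinG
      obtain ⟨h1, h2, h3, h4⟩ := hinG
      by_cases hkl : k = l' + 1
      · subst hkl
        have hm : m = n := by
          rw [abs_le] at h4
          push_cast at h4
          omega
        subst hm
        obtain ⟨A, B, hgA, hVA, hVB⟩ := decomp (l'+1) m ξs hA
        obtain ⟨_, _, hc1, hc2⟩ := top (l'+1) m hodd hle ξs hA hmin A B hgA hVA hVB
        rw [hVfun (m+1) (l'+1), hVfun (m-1) (l'+1)]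
        exact ⟨hc1, hc2⟩
      · -- interior point : pass to a child problem
        have hVA := hdlow l' (n+1) ξs hA
        have hVB := hdlow l' (n-1) ξs hA
        obtain ⟨hAe, hBe, _, _⟩ := top (l'+1) n hodd hle ξs hA hmin _ _
          (gridAction_succ N K H c hcv vin n l' ξs) hVA hVB
        have hminT : ∀ ξ, Adm N K ξ →
            gridAction N K H c hcv vin (n+1) l' ξs ≤ gridAction N K H c hcv vin (n+1) l' ξ := by
          intro ξ hξ; rw [hAe]; exact hdlow l' (n+1) ξ hξ
        have hminF : ∀ ξ, Adm N K ξ →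
            gridAction N K H c hcv vin (n-1) l' ξs ≤ gridAction N K H c hcv vin (n-1) l' ξ := by
          intro ξ hξ; rw [hBe]; exact hdlow l' (n-1) ξ hξ
        rw [abs_le] at h4
        push_cast at h4
        obtain ⟨a, ha⟩ := h3
        obtain ⟨b, hb⟩ := hodd
        have hle' : l' + 1 ≤ Nat.floor (T / dt K) := by omega
        by_cases hσ : (m:ℤ) - n = -(((l':ℤ) + 1) - (k:ℤ))
        · -- go to the left child
          refine ih (n-1) ⟨b - 1, by omega⟩ hle' ξs hA hminF m k ?_
          refine ⟨by omega, by omega, ⟨a, ha⟩, ?_⟩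
          rw [abs_le]
          push_cast
          constructor <;> omega
        · refine ih (n+1) ⟨b, by omega⟩ hle' ξs hA hminT m k ?_
          refine ⟨by omega, by omega, ⟨a, ha⟩, ?_⟩
          rw [abs_le]
          push_cast
          constructor <;> omega
  intro n l hodd hle ξs hA hmin m k hinG
  exact key l n hodd hle ξs hA hmin m k hinG
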